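/- Let s be a natural number, let v : {1,…,s+1} → ℝ and α : {1,…,s+1} × {1,…,s+1} → ℝ satisfy the consistency condition v_i + Σ_{j<i} α_{ij} = 1 for every i. Let b, c, T, h ∈ ℝ and S⁰, I⁰, R⁰ ∈ ℝ be arbitrary. Define the stage values S_(i), I_(i), R_(i) by S_(i) = v_i·S⁰ + Σ_{j<i} α_{ij}·(S_(j) − h·(S_(j)·T + c·S_(j))), I_(i) = v_i·I⁰ + Σ_{j<i} α_{ij}·(I_(j) + h·(S_(j)·T − b·I_(j))), R_(i) = v_i·R⁰ + Σ_{j<i} α_{ij}·(R_(j) + h·(b·I_(j) + c·S_(j))). Then S_(i) + I_(i) + R_(i) = S⁰ + I⁰ + R⁰ for every i ∈ {1,…,s+1}; in particular S_(s+1) + I_(s+1) + R_(s+1) = S⁰ + I⁰ + R⁰. -/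
import Mathlib


theorem stmt_16 (s : ℕ) (v : Fin (s + 1) → ℝ) (α : Fin (s + 1) → Fin (s + 1) → ℝ)
    (hcons : ∀ i, v i + ∑ j ∈ Finset.Iio i, α i j = 1)
    (b c T h S₀ I₀ R₀ : ℝ)
    (S I R : Fin (s + 1) → ℝ)
    (hS : ∀ i, S i = v i * S₀ +
      ∑ j ∈ Finset.Iio i, α i j * (S j - h * (S j * T + c * S j)))
    (hI : ∀ i, I i = v i * I₀ +
      ∑ j ∈ Finset.Iio i, α i j * (I j + h * (S j * T - b * I j)))
    (hR : ∀ i, R i = v i * R₀ +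
      ∑ j ∈ Finset.Iio i, α i j * (R j + h * (b * I j + c * S j))) :
    (∀ i, S i + I i + R i = S₀ + I₀ + R₀) ∧
    S (Fin.last s) + I (Fin.last s) + R (Fin.last s) = S₀ + I₀ + R₀ := by
  have key : ∀ n : ℕ, ∀ i : Fin (s + 1), (i : ℕ) < n → S i + I i + R i = S₀ + I₀ + R₀ := by
    intro n
    induction n with
    | zero => intro i hi; omega
    | succ n ihn =>
      intro i hi
      have ih : ∀ j : Fin (s + 1), j < i → S j + I j + R j = S₀ + I₀ + R₀ := by
        intro j hj
        exact ihn j (by omega)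
      have e : ∑ j ∈ Finset.Iio i, α i j * (S j + I j + R j)
          = (∑ j ∈ Finset.Iio i, α i j * (S j - h * (S j * T + c * S j)))
            + (∑ j ∈ Finset.Iio i, α i j * (I j + h * (S j * T - b * I j)))
            + (∑ j ∈ Finset.Iio i, α i j * (R j + h * (b * I j + c * S j))) := by
        rw [← Finset.sum_add_distrib, ← Finset.sum_add_distrib]
        exact Finset.sum_congr rfl fun j _ => by ring
      have h1 : S i + I i + R i
          = v i * (S₀ + I₀ + R₀) + ∑ j ∈ Finset.Iio i, α i j * (S j + I j + R j) := by
        rw [hS i, hI i, hR i, e]; ring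
      rw [h1]
      have h2 : ∑ j ∈ Finset.Iio i, α i j * (S j + I j + R j)
          = ∑ j ∈ Finset.Iio i, α i j * (S₀ + I₀ + R₀) := by
        apply Finset.sum_congr rfl
        intro j hj
        rw [ih j (Finset.mem_Iio.mp hj)]
      rw [h2, ← Finset.sum_mul, ← add_mul, hcons i, one_mul]
  exact ⟨fun i => key (s + 1) i i.isLt, key (s + 1) _ (Fin.isLt _)⟩
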